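/- Let E be a real inner product space, let α > 0, ρ > 0 and x ∈ E. Define the soft-thresholding (shrinkage) point d* = (max(‖x‖ − α/ρ, 0)/‖x‖)·x if x ≠ 0 and d* = 0 if x = 0. Then d* is the unique minimizer over E of the function d ↦ α‖d‖ + (ρ/2)‖d − x‖²; i.e., for every d ∈ E with d ≠ d* one has α‖d*‖ + (ρ/2)‖d* − x‖² < α‖d‖ + (ρ/2)‖d − x‖². -/

import Mathlib

noncomputable section
open Classical

/-- The soft-thresholding (shrinkage) operator. -/
def shrink {E : Type*} [NormedAddCommGroup E] [InnerProductSpace ℝ E] (x : E) (c : ℝ) : E :=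
  if x = 0 then 0 else (max (‖x‖ - c) 0 / ‖x‖) • x

theorem shrink_is_unique_minimizer {E : Type*} [NormedAddCommGroup E] [InnerProductSpace ℝ E]
    (α ρ : ℝ) (hα : 0 < α) (hρ : 0 < ρ) (x : E) :
    ∀ d : E, d ≠ shrink x (α / ρ) →
      α * ‖shrink x (α / ρ)‖ + ρ / 2 * ‖shrink x (α / ρ) - x‖ ^ 2
        < α * ‖d‖ + ρ / 2 * ‖d - x‖ ^ 2 := by
  intro d hd
  set c : ℝ := α / ρ with hc
  have hc0 : 0 < c := div_pos hα hρ
  have hαc : α = ρ * c := by rw [hc]; field_simp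
  have hCS : inner ℝ d x ≤ ‖d‖ * ‖x‖ := real_inner_le_norm d x
  have hdx : ‖d - x‖ ^ 2 = ‖d‖ ^ 2 - 2 * inner ℝ d x + ‖x‖ ^ 2 := by
    rw [@norm_sub_sq_real]
  by_cases hx : ‖x‖ ≤ c
  · -- shrink = 0
    have hs : shrink x c = 0 := by
      unfold shrink
      split
      · rfl
      · rw [max_eq_right (by linarith), zero_div, zero_smul]
    rw [hs] at hd ⊢
    have hd0 : 0 < ‖d‖ := norm_pos_iff.mpr hd
    have hρx : ρ * ‖x‖ ≤ α := by
      rw [hαc]; nlinarith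
    simp only [norm_zero, zero_sub, norm_neg]
    nlinarith [mul_le_mul_of_nonneg_left hCS hρ.le,
      mul_nonneg hd0.le (sub_nonneg.mpr hρx), mul_pos hd0 hd0]
  · push_neg at hx
    have hx0 : (0:ℝ) < ‖x‖ := lt_trans hc0 hx
    have hxne : x ≠ 0 := by simpa [norm_pos_iff] using hx0
    have hs : shrink x c = ((‖x‖ - c) / ‖x‖) • x := by
      unfold shrink
      rw [if_neg hxne, max_eq_left (by linarith)]
    have hn1 : ‖shrink x c‖ = ‖x‖ - c := by
      rw [hs, norm_smul, Real.norm_eq_abs,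
        abs_of_nonneg (div_nonneg (by linarith) hx0.le),
        div_mul_cancel₀ _ (ne_of_gt hx0)]
    have hsub : shrink x c - x = (-(c / ‖x‖)) • x := by
      rw [hs]
      rw [show ((‖x‖ - c) / ‖x‖) • x - x = ((‖x‖ - c) / ‖x‖ - 1) • x by
        rw [sub_smul, one_smul]]
      congr 1
      field_simp
      ring
    have hn2 : ‖shrink x c - x‖ = c := by
      rw [hsub, norm_smul, Real.norm_eq_abs, abs_neg, abs_of_nonneg (by positivity),
        div_mul_cancel₀ _ (ne_of_gt hx0)]
    rw [hn1, hn2, hdx]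
    -- identity: RHS - LHS = ρ/2 (‖d‖ - (‖x‖-c))² + ρ (‖d‖‖x‖ - ⟪d,x⟫)
    rcases lt_or_eq_of_le hCS with hlt | heq
    · nlinarith [sq_nonneg (‖d‖ - (‖x‖ - c))]
    · -- equality in Cauchy-Schwarz: d is a nonneg multiple of x
      have hdd : ‖x‖ • d = ‖d‖ • x := by
        exact inner_eq_norm_mul_iff_real.mp heq
      have hdxm : d = (‖d‖ / ‖x‖) • x := by
        have := congrArg (fun v => (‖x‖)⁻¹ • v) hdd
        simpa [smul_smul, inv_mul_cancel₀ (ne_of_gt hx0), div_eq_inv_mul] using this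
      have hne : ‖d‖ ≠ ‖x‖ - c := by
        intro h
        apply hd
        rw [hdxm, hs, h]
      have hpos : 0 < (‖d‖ - (‖x‖ - c)) ^ 2 := by
        rw [← sq_abs]
        exact pow_pos (abs_pos.mpr (sub_ne_zero.mpr hne)) 2
      nlinarith
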